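/- Let c_e, c₁ > 0, c₃ ≥ 0, c₀ ∈ ℝ, and let A, B, E, ρ: (R₀,∞) → (0,∞) be differentiable with A'(r)/A(r) = c₀·r·B(r)·E(r) for all r, satisfying c_e·A(r)² = r²E(r)²·((1+c₃)c_e + c₁ r⁴ B(r)⁴) pointwise, with A(r) → a₀ > 0 and B(r) → b₀ > 0 as r → ∞. Then lim_{r→∞} r²·A'(r)/A(r) = c₀·a₀·√(c_e/c₁)/b₀ and lim_{r→∞} r·(a₀/A(r) − 1) = c₀·a₀·√(c_e/c₁)/b₀; i.e. 1/A(r) = (1/a₀)·(1 + 2M/r) + o(1/r) with mass parameter 2M = c₀·a₀·√(c_e/c₁)/b₀, reproducing the linearized Schwarzschild behavior at large r. -/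

import Mathlib

open Real Filter Topology Set

/-- If `f' s ≤ c / s²` for all `s ≥ r` and `f → ℓ`, then `ℓ - f r ≤ c / r`. -/
lemma aux_upper (f : ℝ → ℝ) (R₀ ℓ c r : ℝ) (hR₀r : R₀ < r) (hr0 : 0 < r)
    (hdiff : ∀ s ∈ Ioi R₀, DifferentiableAt ℝ f s)
    (hf : Tendsto f atTop (𝓝 ℓ))
    (hub : ∀ s, r ≤ s → deriv f s ≤ c / s ^ 2) :
    ℓ - f r ≤ c / r := by
  set g : ℝ → ℝ := fun s => f s + c * s⁻¹ with hg
  have hgd : ∀ s ∈ Ici r, HasDerivAt g (deriv f s + c * -((s : ℝ) ^ 2)⁻¹) s := by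
    intro s hs
    have hs0 : s ≠ 0 := (lt_of_lt_of_le hr0 hs).ne'
    exact ((hdiff s (lt_of_lt_of_le hR₀r hs)).hasDerivAt).add
      ((hasDerivAt_inv hs0).const_mul c)
  have hanti : AntitoneOn g (Ici r) := by
    apply antitoneOn_of_deriv_nonpos (convex_Ici r)
    · exact fun s hs => ((hgd s hs).continuousAt).continuousWithinAt
    · intro s hs
      rw [interior_Ici] at hs
      exact ((hgd s (mem_Ici.mpr (mem_Ioi.mp hs).le)).differentiableAt).differentiableWithinAt
    · intro s hs
      rw [interior_Ici] at hs
      rw [(hgd s (mem_Ici.mpr (mem_Ioi.mp hs).le)).deriv]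
      have h := hub s hs.le
      rw [div_eq_mul_inv] at h
      linarith
  have hev : ∀ᶠ T in atTop, g T ≤ g r := by
    filter_upwards [eventually_ge_atTop r] with T hT
    exact hanti (self_mem_Ici) hT hT
  have hlim : Tendsto g atTop (𝓝 (ℓ + c * 0)) :=
    hf.add (tendsto_inv_atTop_zero.const_mul c)
  have hle : ℓ + c * 0 ≤ g r := le_of_tendsto hlim hev
  have : ℓ ≤ f r + c * r⁻¹ := by simpa [hg] using hle
  rw [div_eq_mul_inv]
  linarith

/-- If `f → ℓ` and `r² f' → L`, then `r (ℓ - f r) → L`. -/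
lemma deriv_to_limit (f : ℝ → ℝ) (R₀ ℓ L : ℝ)
    (hdiff : ∀ s ∈ Ioi R₀, DifferentiableAt ℝ f s)
    (hf : Tendsto f atTop (𝓝 ℓ))
    (hL : Tendsto (fun r => r ^ 2 * deriv f r) atTop (𝓝 L)) :
    Tendsto (fun r => r * (ℓ - f r)) atTop (𝓝 L) := by
  rw [Metric.tendsto_atTop] at hL ⊢
  intro ε hε
  obtain ⟨N, hN⟩ := hL (ε / 2) (by positivity)
  refine ⟨max N (max R₀ 0) + 1, fun r hr => ?_⟩
  have hrN : N ≤ r := le_trans (le_trans (le_max_left _ _) (le_add_of_nonneg_right zero_le_one)) hr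
  have hrR₀ : R₀ < r :=
    lt_of_le_of_lt (le_trans (le_max_left _ _) (le_max_right N _))
      (lt_of_lt_of_le (lt_add_one _) hr)
  have hr0 : 0 < r :=
    lt_of_le_of_lt (le_trans (le_max_right R₀ 0) (le_max_right N _))
      (lt_of_lt_of_le (lt_add_one _) hr)
  have hub : ∀ s, r ≤ s → deriv f s ≤ (L + ε / 2) / s ^ 2 := by
    intro s hs
    have hs0 : 0 < s := lt_of_lt_of_le hr0 hs
    have h := hN s (le_trans hrN hs)
    rw [Real.dist_eq, abs_lt] at h
    rw [le_div_iff₀ (by positivity)]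
    nlinarith [h.2]
  have hub' : ∀ s, r ≤ s → deriv (fun x => -f x) s ≤ (-(L - ε / 2)) / s ^ 2 := by
    intro s hs
    have hs0 : 0 < s := lt_of_lt_of_le hr0 hs
    have h := hN s (le_trans hrN hs)
    rw [Real.dist_eq, abs_lt] at h
    have hd : deriv (fun x => -f x) s = -deriv f s := deriv.fun_neg
    rw [hd, neg_div, neg_le_neg_iff, div_le_iff₀ (by positivity : (0:ℝ) < s ^ 2)]
    nlinarith [h.1]
  have upper := aux_upper f R₀ ℓ (L + ε / 2) r hrR₀ hr0 hdiff hf hub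
  have lower := aux_upper (fun x => -f x) R₀ (-ℓ) (-(L - ε / 2)) r hrR₀ hr0
    (fun s hs => (hdiff s hs).neg) hf.neg hub'
  rw [neg_div] at lower
  have h1 : r * (ℓ - f r) ≤ L + ε / 2 := by
    have := mul_le_mul_of_nonneg_left upper hr0.le
    rwa [mul_div_cancel₀ _ hr0.ne'] at this
  have h2 : L - ε / 2 ≤ r * (ℓ - f r) := by
    have hlow : (L - ε / 2) / r ≤ ℓ - f r := by linarith
    have := mul_le_mul_of_nonneg_left hlow hr0.le
    rwa [mul_div_cancel₀ _ hr0.ne'] at this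
  rw [Real.dist_eq, abs_lt]
  constructor <;> linarith

set_option maxHeartbeats 1000000 in
/-- Let `c_e, c₁ > 0`, `c₃ ≥ 0`, `c₀ ∈ ℝ`. If `A, B, E : (R₀,∞) → (0,∞)` with
`A` differentiable satisfy the equation of motion `A'/A = c₀ r B E` and the on-shell relation
`c_e A² = r²E²((1+c₃)c_e + c₁r⁴B⁴)`, with `A → a₀ > 0` and `B → b₀ > 0` as `r → ∞`, then
`lim r²A'/A = c₀a₀√(c_e/c₁)/b₀` and `lim r(a₀/A − 1) = c₀a₀√(c_e/c₁)/b₀`;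
i.e. `1/A = (1/a₀)(1 + 2M/r) + o(1/r)` with `2M = c₀a₀√(c_e/c₁)/b₀`, reproducing the
linearized Schwarzschild behavior at large `r`. -/
theorem A_asymptotics_Schwarzschild
    (c_e c₁ c₃ c₀ R₀ a₀ b₀ : ℝ)
    (hce : 0 < c_e) (hc₁ : 0 < c₁) (hc₃ : 0 ≤ c₃) (hR₀ : 0 < R₀)
    (A B E : ℝ → ℝ)
    (hApos : ∀ r ∈ Ioi R₀, 0 < A r)
    (hBpos : ∀ r ∈ Ioi R₀, 0 < B r)
    (hEpos : ∀ r ∈ Ioi R₀, 0 < E r)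
    (hAdiff : ∀ r ∈ Ioi R₀, DifferentiableAt ℝ A r)
    (heom : ∀ r ∈ Ioi R₀, deriv A r / A r = c₀ * r * B r * E r)
    (hrel : ∀ r ∈ Ioi R₀,
      c_e * A r ^ 2 = r ^ 2 * E r ^ 2 * ((1 + c₃) * c_e + c₁ * r ^ 4 * B r ^ 4))
    (ha₀ : 0 < a₀) (hb₀ : 0 < b₀)
    (hA : Tendsto A atTop (𝓝 a₀))
    (hB : Tendsto B atTop (𝓝 b₀)) :
    Tendsto (fun r : ℝ => r ^ 2 * deriv A r / A r) atTop
      (𝓝 (c₀ * a₀ * Real.sqrt (c_e / c₁) / b₀)) ∧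
    Tendsto (fun r : ℝ => r * (a₀ / A r - 1)) atTop
      (𝓝 (c₀ * a₀ * Real.sqrt (c_e / c₁) / b₀)) := by
  have hb₀ne : b₀ ≠ 0 := hb₀.ne'
  have ha₀ne : a₀ ≠ 0 := ha₀.ne'
  -- limit of the closed-form expression
  have hden : Tendsto (fun r : ℝ => (1 + c₃) * c_e / r ^ 4 + c₁ * B r ^ 4) atTop
      (𝓝 (0 + c₁ * b₀ ^ 4)) :=
    (Tendsto.div_atTop tendsto_const_nhds (tendsto_pow_atTop (by norm_num))).add
      ((hB.pow 4).const_mul c₁)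
  have hdenpos : (0:ℝ) < 0 + c₁ * b₀ ^ 4 := by positivity
  have hsden : Tendsto (fun r : ℝ => Real.sqrt ((1 + c₃) * c_e / r ^ 4 + c₁ * B r ^ 4)) atTop
      (𝓝 (Real.sqrt (0 + c₁ * b₀ ^ 4))) := hden.sqrt
  have hnum : Tendsto (fun r : ℝ => c₀ * B r * A r * Real.sqrt c_e) atTop
      (𝓝 (c₀ * b₀ * a₀ * Real.sqrt c_e)) :=
    (((tendsto_const_nhds.mul hB).mul hA).mul tendsto_const_nhds)
  have hF : Tendsto (fun r : ℝ =>
      c₀ * B r * A r * Real.sqrt c_e / Real.sqrt ((1 + c₃) * c_e / r ^ 4 + c₁ * B r ^ 4)) atTop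
      (𝓝 (c₀ * b₀ * a₀ * Real.sqrt c_e / Real.sqrt (0 + c₁ * b₀ ^ 4))) :=
    hnum.div hsden (Real.sqrt_ne_zero'.mpr hdenpos)
  have hval : c₀ * b₀ * a₀ * Real.sqrt c_e / Real.sqrt (0 + c₁ * b₀ ^ 4)
      = c₀ * a₀ * Real.sqrt (c_e / c₁) / b₀ := by
    rw [zero_add, Real.sqrt_mul hc₁.le, Real.sqrt_div hce.le,
      show b₀ ^ 4 = (b₀ ^ 2) ^ 2 by ring, Real.sqrt_sq (by positivity)]
    have hsc₁ : Real.sqrt c₁ ≠ 0 := (Real.sqrt_pos.mpr hc₁).ne'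
    field_simp
  rw [hval] at hF
  -- eventual equality with r² A'/A
  have heq : (fun r : ℝ =>
      c₀ * B r * A r * Real.sqrt c_e / Real.sqrt ((1 + c₃) * c_e / r ^ 4 + c₁ * B r ^ 4))
      =ᶠ[atTop] fun r : ℝ => r ^ 2 * deriv A r / A r := by
    filter_upwards [eventually_gt_atTop (max R₀ 0)] with r hr
    have hrR₀ : R₀ < r := lt_of_le_of_lt (le_max_left _ _) hr
    have hr0 : (0:ℝ) < r := lt_of_le_of_lt (le_max_right _ _) hr
    have hr' : r ∈ Ioi R₀ := hrR₀
    have hApr : 0 < A r := hApos r hr'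
    have hBpr : 0 < B r := hBpos r hr'
    have hEpr : 0 < E r := hEpos r hr'
    set S : ℝ := (1 + c₃) * c_e + c₁ * r ^ 4 * B r ^ 4 with hSdef
    have hS : 0 < S := by
      have h1 : 0 < (1 + c₃) * c_e := by positivity
      have h2 : 0 < c₁ * r ^ 4 * B r ^ 4 := by positivity
      linarith
    have hsqS : 0 < Real.sqrt S := Real.sqrt_pos.mpr hS
    have hsq : (r * E r * Real.sqrt S) ^ 2 = (Real.sqrt c_e * A r) ^ 2 := by
      rw [mul_pow, mul_pow, mul_pow, Real.sq_sqrt hS.le, Real.sq_sqrt hce.le]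
      linear_combination -(hrel r hr')
    have h2 : r * E r * Real.sqrt S = Real.sqrt c_e * A r := by
      have := congrArg Real.sqrt hsq
      rwa [Real.sqrt_sq (by positivity), Real.sqrt_sq (by positivity)] at this
    have hEr : E r = Real.sqrt c_e * A r / (r * Real.sqrt S) := by
      rw [eq_div_iff (by positivity)]
      linear_combination h2
    have hinner : (1 + c₃) * c_e / r ^ 4 + c₁ * B r ^ 4 = S / r ^ 4 := by
      field_simp [hSdef]
      ring
    have hsqrtS : Real.sqrt ((1 + c₃) * c_e / r ^ 4 + c₁ * B r ^ 4) = Real.sqrt S / r ^ 2 := by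
      rw [hinner, Real.sqrt_div hS.le, show r ^ 4 = (r ^ 2) ^ 2 by ring,
        Real.sqrt_sq (by positivity)]
    have heom' : deriv A r = c₀ * r * B r * E r * A r := by
      have h := heom r hr'
      field_simp at h
      linarith
    rw [hsqrtS, heom', hEr]
    field_simp
  have part1 : Tendsto (fun r : ℝ => r ^ 2 * deriv A r / A r) atTop
      (𝓝 (c₀ * a₀ * Real.sqrt (c_e / c₁) / b₀)) := hF.congr' heq
  refine ⟨part1, ?_⟩
  -- part 2
  set L : ℝ := c₀ * a₀ * Real.sqrt (c_e / c₁) / b₀ with hL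
  have hfd : ∀ s ∈ Ioi R₀, DifferentiableAt ℝ (fun x => a₀ / A x) s := fun s hs =>
    (differentiableAt_const a₀).div (hAdiff s hs) (hApos s hs).ne'
  have hf1 : Tendsto (fun r : ℝ => a₀ / A r) atTop (𝓝 1) := by
    have := (tendsto_const_nhds : Tendsto (fun _ : ℝ => a₀) atTop (𝓝 a₀)).div hA ha₀ne
    rw [div_self ha₀ne] at this
    exact this
  have hderiv : Tendsto (fun r : ℝ => r ^ 2 * deriv (fun x => a₀ / A x) r) atTop (𝓝 (-L)) := by
    have haux : Tendsto (fun r : ℝ => -a₀ / A r * (r ^ 2 * deriv A r / A r)) atTop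
        (𝓝 (-a₀ / a₀ * L)) := ((tendsto_const_nhds : Tendsto (fun _ : ℝ => -a₀) atTop (𝓝 (-a₀))).div hA ha₀ne).mul part1
    rw [neg_div, div_self ha₀ne, neg_one_mul] at haux
    refine haux.congr' ?_
    filter_upwards [eventually_gt_atTop R₀] with r hr
    have hApr : 0 < A r := hApos r hr
    have hd : HasDerivAt (fun x => a₀ * (A x)⁻¹) (a₀ * (-deriv A r / A r ^ 2)) r :=
      (((hAdiff r hr).hasDerivAt).inv hApr.ne').const_mul a₀
    have hde : deriv (fun x => a₀ / A x) r = a₀ * (-deriv A r / A r ^ 2) := by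
      have : (fun x => a₀ / A x) = fun x => a₀ * (A x)⁻¹ := by
        funext x; rw [div_eq_mul_inv]
      rw [this, hd.deriv]
    rw [hde]
    field_simp
  have key := deriv_to_limit (fun x => a₀ / A x) R₀ 1 (-L) hfd hf1 hderiv
  have key2 := key.neg
  rw [neg_neg] at key2
  refine key2.congr fun r => by ring
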